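/- There exists a 5×5 matrix A of nonnegative integers with first row (1,0,0,0,0) and det A = 1 such that for all j ≠ k in {1,…,5} there exists a row i with a_{ij} > 0 and a_{ik} = 0, but A is not a permutation matrix; for instance the matrix with rows (1,0,0,0,0), (0,2,0,1,0), (0,0,1,0,1), (0,1,1,0,0), (0,0,0,1,1). -/

import Mathlib

/-- There is a 5×5 nonnegative integer matrix with first row (1,0,0,0,0),
determinant 1, satisfying the almost monomial divisibility condition, which is not a
permutation matrix; e.g. the matrix with rows (1,0,0,0,0), (0,2,0,1,0), (0,0,1,0,1),
(0,1,1,0,0), (0,0,0,1,1). -/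
theorem stmt_8 :
    ∃ A : Matrix (Fin 5) (Fin 5) ℕ,
      A = !![1,0,0,0,0; 0,2,0,1,0; 0,0,1,0,1; 0,1,1,0,0; 0,0,0,1,1] ∧
      (A 0 0 = 1 ∧ A 0 1 = 0 ∧ A 0 2 = 0 ∧ A 0 3 = 0 ∧ A 0 4 = 0) ∧
      (A.map (Nat.cast : ℕ → ℤ)).det = 1 ∧
      (∀ j k : Fin 5, j ≠ k → ∃ i : Fin 5, 0 < A i j ∧ A i k = 0) ∧
      ¬ ∃ σ : Equiv.Perm (Fin 5), A = (1 : Matrix (Fin 5) (Fin 5) ℕ).submatrix σ id := by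
  refine ⟨_, rfl, ⟨rfl, rfl, rfl, rfl, rfl⟩, ?_, ?_, ?_⟩
  · simp [Matrix.det_succ_row_zero, Fin.sum_univ_succ, Matrix.map_apply, Fin.succAbove]
  · decide
  · rintro ⟨σ, h⟩
    have := congrFun (congrFun h 1) 1
    have hs : (1 : Matrix (Fin 5) (Fin 5) ℕ).submatrix σ id 1 1 ≤ 1 := by
      simp [Matrix.submatrix_apply, Matrix.one_apply]
      split <;> simp
    rw [← this] at hs
    simp at hs
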